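/- Let θ₁⁰ > 0 be a positive real number. There exists a constant K > 0, depending only on θ₁⁰, such that for every real θ₁ with θ₁⁰/2 ≤ θ₁ ≤ 3θ₁⁰/2 and all probability measures g, g⁰ on [0,1], d_TV(q_{θ₁,1,g}, q_{θ₁⁰,1,g⁰}) ≥ K |θ₁ − θ₁⁰|³. (Key quantitative inequality in the proof of the paper's Proposition 4.1 on the contraction of the first Fourier coefficient.) -/

import Mathlib

open MeasureTheory Measure

noncomputable section

/-- The frequency-`k` marginal mixture density on `ℂ`:
`q_{θ,k,g}(z) = π⁻¹ ∫₀¹ exp(-|z - θ e^{-2πikφ}|²) dg(φ)`, for a mixing measure `g`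
(a measure on `ℝ` thought of as carried by `[0,1]`). -/
def qdens (θ : ℂ) (k : ℤ) (g : Measure ℝ) (z : ℂ) : ℝ :=
  (∫ φ, Real.exp (-(‖
      (z - θ * Complex.exp (-(2 * Real.pi * (k : ℝ) * φ : ℝ) * Complex.I))‖) ^ 2) ∂g) / Real.pi

/-- Total variation distance between densities on `ℂ`. -/
def dTVc (q₁ q₂ : ℂ → ℝ) : ℝ :=
  (1 / 2) * ∫ z : ℂ, |q₁ z - q₂ z|

/-- A probability measure on `[0,1]`, modelled as a probability measure on `ℝ`
giving no mass to the complement of `[0,1]`. -/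
def IsProbOn01 (g : Measure ℝ) : Prop :=
  IsProbabilityMeasure g ∧ g (Set.Icc (0 : ℝ) 1)ᶜ = 0

/-- The Fourier coefficients `cₙ(g) = ∫₀¹ e^{-2πint} dg(t)` of a measure `g`. -/
def fourierCoeffM (g : Measure ℝ) (n : ℤ) : ℂ :=
  ∫ t, Complex.exp (-(2 * Real.pi * (n : ℝ) * t : ℝ) * Complex.I) ∂g

open Real

/-! ### Auxiliary Gaussian integral lemmas -/

lemma norm_ident (z a : ℂ) : ‖z‖^2 + ‖z-a‖^2 = 2*‖z - (1/2:ℝ) • a‖^2 + ‖a‖^2/2 := by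
  rw [norm_sub_sq_real, norm_sub_sq_real, real_inner_smul_right, norm_smul]
  simp only [norm_div, Real.norm_ofNat, norm_one]
  ring

lemma integrable_cgauss (c : ℂ) : Integrable (fun z : ℂ => rexp (-‖z - c‖^2)) := by
  have h := GaussianFourier.integrable_cexp_neg_mul_sq_norm_add
      (V := ℂ) (b := (1:ℂ)) (by norm_num) 0 0
  have h2 : Integrable (fun z : ℂ => rexp (-‖z‖^2)) := by
    have := h.norm
    apply this.congr
    filter_upwards with z
    simp [Complex.norm_exp, ← Complex.ofReal_pow]
  have := h2.comp_sub_right c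
  simpa using this

lemma integral_cgauss (c : ℂ) : ∫ z : ℂ, rexp (-‖z - c‖^2) = π := by
  rw [integral_sub_right_eq_self (fun z : ℂ => rexp (-‖z‖^2)) c]
  have := GaussianFourier.integral_rexp_neg_mul_sq_norm (V := ℂ) (b := 1) one_pos
  simp only [neg_mul, one_mul] at this
  rw [this, Complex.finrank_real_complex]
  norm_num

lemma integral_two_gauss (a : ℂ) :
    ∫ z : ℂ, rexp (-‖z‖^2) * rexp (-‖z - a‖^2) = π/2 * rexp (-‖a‖^2/2) := by
  have key : ∀ z : ℂ, rexp (-‖z‖^2) * rexp (-‖z-a‖^2)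
      = rexp (-‖a‖^2/2) * rexp (-2*‖z - (1/2:ℝ) • a‖^2) := by
    intro z
    rw [← Real.exp_add, ← Real.exp_add]
    congr 1
    have := norm_ident z a
    linarith
  simp_rw [key, integral_const_mul]
  rw [integral_sub_right_eq_self (fun z : ℂ => rexp (-2*‖z‖^2)) ((1/2:ℝ) • a)]
  have := GaussianFourier.integral_rexp_neg_mul_sq_norm (V := ℂ) (b := 2) two_pos
  rw [this, Complex.finrank_real_complex]
  norm_num
  ring

/-! ### The density `qdens` rewritten, and Fubini computations -/

def cc (θ : ℝ) (φ : ℝ) : ℂ :=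
  (θ : ℂ) * Complex.exp ((-(2 * Real.pi * ((1:ℤ) : ℝ) * φ) : ℝ) * Complex.I)

lemma norm_cc (θ φ : ℝ) : ‖cc θ φ‖ = |θ| := by
  unfold cc
  rw [norm_mul, Complex.norm_real, Complex.norm_exp]
  simp

lemma cont_cc (θ : ℝ) : Continuous (cc θ) := by unfold cc; fun_prop

lemma qdens_eq (θ : ℝ) (g : Measure ℝ) (z : ℂ) :
    qdens (θ:ℂ) 1 g z = (∫ φ, rexp (-‖z - cc θ φ‖^2) ∂g) / Real.pi := by
  simp only [qdens, cc, Complex.ofReal_neg, neg_neg]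

lemma jointF (θ : ℝ) (g : Measure ℝ) [IsProbabilityMeasure g] :
    Integrable (fun p : ℂ × ℝ => rexp (-‖p.1 - cc θ p.2‖^2)) ((volume : Measure ℂ).prod g) := by
  have hm : AEStronglyMeasurable (fun p : ℂ × ℝ => rexp (-‖p.1 - cc θ p.2‖^2))
      ((volume : Measure ℂ).prod g) := by
    apply Continuous.aestronglyMeasurable
    have := cont_cc θ
    fun_prop
  rw [integrable_prod_iff' hm]
  constructor
  · filter_upwards with φ
    exact integrable_cgauss (cc θ φ)
  · have : (fun φ : ℝ => ∫ z : ℂ, ‖rexp (-‖z - cc θ φ‖^2)‖) = fun φ => Real.pi := by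
      funext φ
      simp only [Real.norm_eq_abs, abs_of_pos (Real.exp_pos _)]
      exact integral_cgauss (cc θ φ)
    rw [this]
    exact integrable_const _

lemma qdens_integrable (θ : ℝ) (g : Measure ℝ) [IsProbabilityMeasure g] :
    Integrable (qdens (θ:ℂ) 1 g) := by
  have h := (jointF θ g).integral_prod_left
  have : qdens (θ:ℂ) 1 g = fun z => (∫ φ, rexp (-‖z - cc θ φ‖^2) ∂g) / Real.pi := by
    funext z; exact qdens_eq θ g z
  rw [this]
  exact h.div_const _

lemma key_int (θ : ℝ) (g : Measure ℝ) [IsProbabilityMeasure g] :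
    ∫ z : ℂ, rexp (-‖z‖^2) * qdens (θ:ℂ) 1 g z = rexp (-θ^2/2) / 2 := by
  have hG : Integrable (fun p : ℂ × ℝ => rexp (-‖p.1‖^2) * rexp (-‖p.1 - cc θ p.2‖^2))
      ((volume : Measure ℂ).prod g) := by
    apply (jointF θ g).mono
    · apply Continuous.aestronglyMeasurable
      have := cont_cc θ
      fun_prop
    · filter_upwards with p
      simp only [Real.norm_eq_abs, abs_of_pos (Real.exp_pos _),
        abs_of_pos (mul_pos (Real.exp_pos _) (Real.exp_pos _))]
      nth_rewrite 2 [show rexp (-‖p.1 - cc θ p.2‖^2) = 1 * rexp (-‖p.1 - cc θ p.2‖^2) by ring]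
      apply mul_le_mul_of_nonneg_right _ (Real.exp_pos _).le
      exact Real.exp_le_one_iff.mpr (neg_nonpos.mpr (by positivity))
  calc ∫ z : ℂ, rexp (-‖z‖^2) * qdens (θ:ℂ) 1 g z
      = ∫ z : ℂ, (∫ φ, rexp (-‖z‖^2) * rexp (-‖z - cc θ φ‖^2) ∂g) / Real.pi := by
        congr 1; funext z
        rw [qdens_eq, integral_const_mul, mul_div_assoc]
    _ = (∫ z : ℂ, ∫ φ, rexp (-‖z‖^2) * rexp (-‖z - cc θ φ‖^2) ∂g) / Real.pi := by
        rw [integral_div]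
    _ = (∫ φ, (∫ z : ℂ, rexp (-‖z‖^2) * rexp (-‖z - cc θ φ‖^2)) ∂g) / Real.pi := by
        rw [integral_integral_swap hG]
    _ = (∫ _ : ℝ, Real.pi/2 * rexp (-θ^2/2) ∂g) / Real.pi := by
        congr 1; apply integral_congr_ae; filter_upwards with φ
        rw [integral_two_gauss (cc θ φ), norm_cc, sq_abs]
    _ = rexp (-θ^2/2) / 2 := by
        rw [integral_const, probReal_univ]
        simp
        field_simp

/-! ### The calculus gap inequality -/

lemma exp_sq_gap (L U : ℝ) (hL : 0 < L) (a b : ℝ)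
    (ha : a ∈ Set.Icc L U) (hb : b ∈ Set.Icc L U) :
    L * rexp (-U^2/2) * |a - b| ≤ |rexp (-a^2/2) - rexp (-b^2/2)| := by
  set m := L * rexp (-U^2/2) with hm
  have key : ∀ x y, x ∈ Set.Icc L U → y ∈ Set.Icc L U → x ≤ y →
      m * (y - x) ≤ rexp (-x^2/2) - rexp (-y^2/2) := by
    intro x y hx hy hxy
    have hH : AntitoneOn (fun t : ℝ => rexp (-t^2/2) + m * t) (Set.Icc L U) := by
      have hd : ∀ t : ℝ, HasDerivAt (fun t : ℝ => rexp (-t^2/2) + m * t)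
          (rexp (-t^2/2) * -t + m) t := by
        intro t
        have h1 : HasDerivAt (fun x : ℝ => -x^2/2) (-t) t := by
          have h0 := ((hasDerivAt_pow 2 t).neg).div_const 2
          exact h0.congr_deriv (by ring)
        have h2 := h1.exp
        have h3 := (hasDerivAt_id t).const_mul m
        exact (h2.add h3).congr_deriv (by ring)
      apply antitoneOn_of_deriv_nonpos (convex_Icc L U)
      · exact Continuous.continuousOn (by fun_prop)
      · exact fun t _ => (hd t).differentiableAt.differentiableWithinAt
      · intro t ht
        rw [interior_Icc] at ht
        rw [(hd t).deriv]
        have htL : L < t := ht.1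
        have htU : t < U := ht.2
        have e1 : rexp (-U^2/2) ≤ rexp (-t^2/2) := by
          apply Real.exp_le_exp.mpr
          nlinarith
        have ht0 : 0 < t := lt_trans hL htL
        nlinarith [Real.exp_pos (-t^2/2), Real.exp_pos (-U^2/2)]
    have := hH hx hy hxy
    simp only at this
    linarith
  rcases le_total a b with h | h
  · have h1 := key a b ha hb h
    have h2 := le_abs_self (rexp (-a^2/2) - rexp (-b^2/2))
    rw [abs_of_nonpos (by linarith : a - b ≤ 0)]
    linarith
  · have h1 := key b a hb ha h
    have h2 := neg_abs_le (rexp (-a^2/2) - rexp (-b^2/2))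
    rw [abs_of_nonneg (by linarith : 0 ≤ a - b)]
    linarith

/-- **Key inequality in the proof of Proposition 4.1 of the paper.** For `θ₁⁰ > 0` there is
`K > 0` (depending only on `θ₁⁰`) such that for every `θ₁ ∈ [θ₁⁰/2, 3θ₁⁰/2]` and all probability
measures `g, g⁰` on `[0,1]`, `d_TV(q_{θ₁,1,g}, q_{θ₁⁰,1,g⁰}) ≥ K |θ₁ - θ₁⁰|³`. -/
theorem tv_lower_bound_first_coeff (θ₁0 : ℝ) (hθ₁0 : 0 < θ₁0) :
    ∃ K : ℝ, 0 < K ∧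
      ∀ θ₁ : ℝ, θ₁0 / 2 ≤ θ₁ → θ₁ ≤ 3 * θ₁0 / 2 →
        ∀ g g0 : Measure ℝ, IsProbOn01 g → IsProbOn01 g0 →
          K * |θ₁ - θ₁0| ^ 3 ≤ dTVc (qdens (θ₁ : ℂ) 1 g) (qdens (θ₁0 : ℂ) 1 g0) := by
  refine ⟨(θ₁0/2) * rexp (-(3*θ₁0/2)^2/2) / θ₁0^2, by positivity, ?_⟩
  intro θ₁ hlo hhi g g0 hg hg0
  haveI := hg.1
  haveI := hg0.1
  have hq1 : Integrable (qdens (θ₁:ℂ) 1 g) := qdens_integrable θ₁ g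
  have hq2 : Integrable (qdens (θ₁0:ℂ) 1 g0) := qdens_integrable θ₁0 g0
  set q1 := qdens (θ₁:ℂ) 1 g with hq1def
  set q2 := qdens (θ₁0:ℂ) 1 g0 with hq2def
  have hcont : Continuous (fun z : ℂ => rexp (-‖z‖^2)) := by fun_prop
  have hfq1 : Integrable (fun z : ℂ => rexp (-‖z‖^2) * q1 z) := by
    apply Integrable.mono hq1 (hcont.aestronglyMeasurable.mul hq1.aestronglyMeasurable)
    filter_upwards with z
    simp only [Pi.mul_apply]
    rw [norm_mul, Real.norm_eq_abs (rexp _), abs_of_pos (Real.exp_pos _)]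
    nth_rewrite 2 [show ‖q1 z‖ = 1 * ‖q1 z‖ from (one_mul _).symm]
    exact mul_le_mul_of_nonneg_right
      (Real.exp_le_one_iff.mpr (neg_nonpos.mpr (by positivity))) (norm_nonneg _)
  have hfq2 : Integrable (fun z : ℂ => rexp (-‖z‖^2) * q2 z) := by
    apply Integrable.mono hq2 (hcont.aestronglyMeasurable.mul hq2.aestronglyMeasurable)
    filter_upwards with z
    simp only [Pi.mul_apply]
    rw [norm_mul, Real.norm_eq_abs (rexp _), abs_of_pos (Real.exp_pos _)]
    nth_rewrite 2 [show ‖q2 z‖ = 1 * ‖q2 z‖ from (one_mul _).symm]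
    exact mul_le_mul_of_nonneg_right
      (Real.exp_le_one_iff.mpr (neg_nonpos.mpr (by positivity))) (norm_nonneg _)
  have hA : ∫ z : ℂ, rexp (-‖z‖^2) * q1 z = rexp (-θ₁^2/2) / 2 := key_int θ₁ g
  have hB : ∫ z : ℂ, rexp (-‖z‖^2) * q2 z = rexp (-θ₁0^2/2) / 2 := key_int θ₁0 g0
  set T := ∫ z : ℂ, |q1 z - q2 z| with hT
  have step1 : |rexp (-θ₁^2/2)/2 - rexp (-θ₁0^2/2)/2| ≤ T := by
    rw [← hA, ← hB, ← integral_sub hfq1 hfq2]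
    have hb1 : |∫ z : ℂ, (rexp (-‖z‖^2) * q1 z - rexp (-‖z‖^2) * q2 z)|
        ≤ ∫ z : ℂ, |rexp (-‖z‖^2) * q1 z - rexp (-‖z‖^2) * q2 z| := by
      simpa [Real.norm_eq_abs] using norm_integral_le_integral_norm
        (fun z : ℂ => rexp (-‖z‖^2) * q1 z - rexp (-‖z‖^2) * q2 z)
    refine hb1.trans ?_
    have hint : Integrable (fun z : ℂ => |q1 z - q2 z|) := (hq1.sub hq2).abs
    apply integral_mono_of_nonneg (Filter.Eventually.of_forall fun z => abs_nonneg _) hint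
    filter_upwards with z
    rw [← mul_sub, abs_mul, abs_of_pos (Real.exp_pos _)]
    nth_rewrite 2 [show |q1 z - q2 z| = 1 * |q1 z - q2 z| from (one_mul _).symm]
    exact mul_le_mul_of_nonneg_right
      (Real.exp_le_one_iff.mpr (neg_nonpos.mpr (by positivity))) (abs_nonneg _)
  have hgap := exp_sq_gap (θ₁0/2) (3*θ₁0/2) (by positivity) θ₁ θ₁0
    ⟨hlo, hhi⟩ ⟨by linarith, by linarith⟩
  have habs : |θ₁ - θ₁0| ≤ θ₁0/2 := abs_le.mpr ⟨by linarith, by linarith⟩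
  have h3 : |θ₁ - θ₁0|^3 ≤ (θ₁0/2)^2 * |θ₁ - θ₁0| := by
    have hcube : |θ₁ - θ₁0|^3 = |θ₁-θ₁0|^2 * |θ₁-θ₁0| := by ring
    rw [hcube]
    exact mul_le_mul_of_nonneg_right (by nlinarith [abs_nonneg (θ₁-θ₁0)]) (abs_nonneg _)
  have heq : |rexp (-θ₁^2/2)/2 - rexp (-θ₁0^2/2)/2|
      = |rexp (-θ₁^2/2) - rexp (-θ₁0^2/2)|/2 := by
    rw [show rexp (-θ₁^2/2)/2 - rexp (-θ₁0^2/2)/2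
      = (rexp (-θ₁^2/2) - rexp (-θ₁0^2/2))/2 by ring, abs_div]
    norm_num
  show (θ₁0/2) * rexp (-(3*θ₁0/2)^2/2) / θ₁0^2 * |θ₁ - θ₁0| ^ 3 ≤ 1/2 * T
  set m := (θ₁0/2) * rexp (-(3*θ₁0/2)^2/2) with hmdef
  have hm : 0 < m := by positivity
  have hK : m/θ₁0^2 * (θ₁0/2)^2 = m/4 := by
    rw [div_mul_eq_mul_div, div_pow, mul_div_assoc, div_div, mul_comm ((2:ℝ)^2) (θ₁0^2),
      ← div_div, div_self (pow_ne_zero 2 hθ₁0.ne')]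
    norm_num
    ring
  have hTgap : |rexp (-θ₁^2/2) - rexp (-θ₁0^2/2)| ≤ 2*T := by
    rw [heq] at step1; linarith
  calc m/θ₁0^2 * |θ₁-θ₁0|^3
      ≤ m/θ₁0^2 * ((θ₁0/2)^2 * |θ₁-θ₁0|) :=
        mul_le_mul_of_nonneg_left h3 (by positivity)
    _ = m/4 * |θ₁-θ₁0| := by rw [← mul_assoc, hK]
    _ ≤ |rexp (-θ₁^2/2) - rexp (-θ₁0^2/2)|/4 := by linarith
    _ ≤ (2*T)/4 := by linarith
    _ = 1/2 * T := by ring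

end
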